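/- Let α ∈ (-1, 0) (a fixed exponent). Then there exists c > 0 and τ0 ≥ 1 such that for all real τ with |τ| ≥ τ0: |τ| · Σ_{k odd, k ≥ |τ|^{1/2}} k^{1-α} / ((1 + ν k²π²/a²)² + τ²) ≥ c |τ|^{-α/2}, for fixed constants ν, a > 0. -/

import Mathlib

set_option maxHeartbeats 800000


theorem stmt_19 (ν a : ℝ) (hν : 0 < ν) (ha : 0 < a) (α : ℝ)
    (hα : α ∈ Set.Ioo (-1:ℝ) 0) :
    ∃ c > 0, ∃ τ0 : ℝ, 1 ≤ τ0 ∧ ∀ τ : ℝ, τ0 ≤ |τ| →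
      c * |τ| ^ (-α/2) ≤ |τ| * ∑' k : ℕ,
        (if Odd k ∧ Real.sqrt |τ| ≤ (k:ℝ)
          then (k:ℝ) ^ (1-α) / ((1 + ν * (k:ℝ)^2 * Real.pi^2 / a^2)^2 + τ^2)
          else 0) := by
  obtain ⟨hα1, hα2⟩ := hα
  have hπ : 0 < Real.pi := Real.pi_pos
  set P : ℝ := ν * Real.pi^2 / a^2 with hPdef
  have hP0 : 0 < P := by positivity
  set K : ℝ := (1 + 25*P)^2 + 1 with hKdef
  have hK0 : 0 < K := by positivity
  refine ⟨1/K, by positivity, 16, by norm_num, ?_⟩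
  intro τ hτ
  set t := |τ| with ht
  have ht0 : 0 < t := lt_of_lt_of_le (by norm_num) hτ
  have ht1 : (1:ℝ) ≤ t := le_trans (by norm_num) hτ
  set s := Real.sqrt t with hs
  have hs0 : 0 < s := Real.sqrt_pos.mpr ht0
  have hs3 : (3:ℝ) ≤ s := by
    have h16 : Real.sqrt 16 ≤ s := Real.sqrt_le_sqrt hτ
    rw [show (16:ℝ) = 4^2 by norm_num, Real.sqrt_sq (by norm_num : (0:ℝ) ≤ 4)] at h16
    linarith
  have hst : s^2 = t := Real.sq_sqrt ht0.le
  have hτt : τ^2 = t^2 := (sq_abs τ).symm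
  set f : ℕ → ℝ := fun k =>
    if Odd k ∧ s ≤ (k:ℝ)
      then (k:ℝ) ^ (1-α) / ((1 + ν * (k:ℝ)^2 * Real.pi^2 / a^2)^2 + τ^2)
      else 0 with hf
  have hfnonneg : ∀ k, 0 ≤ f k := by
    intro k
    rw [hf]
    dsimp only
    split
    · positivity
    · exact le_refl 0
  -- summability
  have hsum : Summable f := by
    have h2 : Summable (fun k : ℕ => (1/P^2) * ((k:ℝ) ^ ((3:ℝ)+α))⁻¹) :=
      Summable.mul_left _ (Real.summable_nat_rpow_inv.mpr (by linarith))
    apply Summable.of_nonneg_of_le hfnonneg _ h2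
    intro k
    rcases Nat.eq_zero_or_pos k with hk | hk
    · subst hk
      have : f 0 = 0 := by
        rw [hf]; simp [Nat.odd_iff]
      rw [this]
      positivity
    · have hk0' : (0:ℝ) < (k:ℝ) := by exact_mod_cast hk
      rw [hf]
      dsimp only
      split
      · have hD : P^2 * ((k:ℝ)^2)^2 ≤ (1 + ν * (k:ℝ)^2 * Real.pi^2 / a^2)^2 + τ^2 := by
          have hx : ν * (k:ℝ)^2 * Real.pi^2 / a^2 = P * (k:ℝ)^2 := by
            rw [hPdef]; ring
          nlinarith [sq_nonneg τ, mul_pos hP0 (pow_pos hk0' 2), sq_nonneg (1 + P * (k:ℝ)^2)]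
        have step1 : (k:ℝ) ^ (1-α) / ((1 + ν * (k:ℝ)^2 * Real.pi^2 / a^2)^2 + τ^2)
            ≤ (k:ℝ) ^ (1-α) / (P^2 * ((k:ℝ)^2)^2) := by
          gcongr
        refine step1.trans (le_of_eq ?_)
        have e1 : (k:ℝ) ^ (1-α) = (k:ℝ) ^ ((4:ℝ)) / (k:ℝ) ^ ((3:ℝ)+α) := by
          rw [← Real.rpow_sub hk0']
          congr 1
          ring
        have e2 : ((k:ℝ)^2)^2 = (k:ℝ) ^ ((4:ℝ)) := by
          rw [show ((4:ℝ)) = ((4:ℕ):ℝ) by norm_num, Real.rpow_natCast]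
          ring
        have h4 : (k:ℝ) ^ ((4:ℝ)) ≠ 0 := (Real.rpow_pos_of_pos hk0' _).ne'
        have h3 : (k:ℝ) ^ ((3:ℝ)+α) ≠ 0 := (Real.rpow_pos_of_pos hk0' _).ne'
        rw [e1, e2]
        field_simp
      · positivity
  -- finite sum lower bound
  set M := ⌈s⌉₊ with hM
  have hMs : s ≤ (M:ℝ) := Nat.le_ceil s
  have hMs' : (M:ℝ) < s + 1 := Nat.ceil_lt_add_one hs0.le
  set g : ℕ → ℕ := fun j => 2*(M+j)+1 with hg
  have hginj : Function.Injective g := by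
    intro i j h
    simp only [hg] at h
    omega
  have hsum_le : ∑ j ∈ Finset.range M, f (g j) ≤ ∑' k, f k := by
    rw [← Finset.sum_image (f := f) (g := g) (fun i _ j _ h => hginj h)]
    exact Summable.sum_le_tsum _ (fun i _ => hfnonneg i) hsum
  have hterm : ∀ j ∈ Finset.range M, s ^ (1-α) / (K * t^2) ≤ f (g j) := by
    intro j hj
    have hjM : j < M := Finset.mem_range.mp hj
    have hjM' : (j:ℝ) ≤ (M:ℝ) - 1 := by
      have : (j:ℝ) + 1 ≤ (M:ℝ) := by exact_mod_cast hjM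
      linarith
    have hj0 : (0:ℝ) ≤ (j:ℝ) := Nat.cast_nonneg j
    have hodd : Odd (g j) := ⟨M+j, rfl⟩
    have hgk : (g j : ℝ) = 2*((M:ℝ)+(j:ℝ))+1 := by
      simp only [hg]
      push_cast
      ring
    have hks : s ≤ (g j : ℝ) := by rw [hgk]; linarith
    have hkle : (g j : ℝ) ≤ 5*s := by rw [hgk]; linarith
    rw [hf]
    dsimp only
    rw [if_pos ⟨hodd, hks⟩]
    have hk2 : ((g j : ℝ))^2 ≤ 25 * t := by
      have h5 : (0:ℝ) ≤ 5*s := by linarith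
      nlinarith
    have hDle : (1 + ν * ((g j):ℝ)^2 * Real.pi^2 / a^2)^2 + τ^2 ≤ K * t^2 := by
      have hx : ν * ((g j):ℝ)^2 * Real.pi^2 / a^2 = P * ((g j):ℝ)^2 := by
        rw [hPdef]; ring
      rw [hx, hτt, hKdef]
      have h1 : 1 + P * ((g j):ℝ)^2 ≤ (1 + 25*P) * t := by nlinarith
      have h0 : (0:ℝ) ≤ 1 + P * ((g j):ℝ)^2 := by positivity
      nlinarith
    have hDpos : (0:ℝ) < (1 + ν * ((g j):ℝ)^2 * Real.pi^2 / a^2)^2 + τ^2 := by positivity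
    exact div_le_div₀ (Real.rpow_nonneg (Nat.cast_nonneg _) _)
      (Real.rpow_le_rpow hs0.le hks (by linarith)) hDpos hDle
  have hsumlb : (M:ℝ) * (s ^ (1-α) / (K * t^2)) ≤ ∑ j ∈ Finset.range M, f (g j) := by
    calc (M:ℝ) * (s ^ (1-α) / (K * t^2))
        = ∑ _j ∈ Finset.range M, s ^ (1-α) / (K * t^2) := by
          rw [Finset.sum_const, Finset.card_range, nsmul_eq_mul]
    _ ≤ _ := Finset.sum_le_sum hterm
  have hT : s * (s ^ (1-α) / (K * t^2)) ≤ ∑' k, f k := by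
    refine le_trans ?_ (hsumlb.trans hsum_le)
    have hc : 0 ≤ s ^ (1-α) / (K * t^2) := by positivity
    exact mul_le_mul_of_nonneg_right hMs hc
  have hmul : t * (s * (s ^ (1-α) / (K * t^2))) ≤ t * ∑' k, f k :=
    mul_le_mul_of_nonneg_left hT ht0.le
  refine le_trans (le_of_eq ?_) hmul
  have e : s * s ^ (1-α) = s ^ ((2:ℝ)-α) := by
    have h := Real.rpow_add hs0 1 (1-α)
    rw [Real.rpow_one] at h
    rw [← h]
    congr 1
    ring
  have e3 : s ^ ((2:ℝ)-α) = t ^ (-α/2) * t := by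
    rw [hs, Real.sqrt_eq_rpow, ← Real.rpow_mul ht0.le, ← Real.rpow_add_one ht0.ne']
    congr 1
    ring
  calc (1/K) * t ^ (-α/2)
      = (t ^ (-α/2) * t) * t / (K * t^2) := by
        field_simp
    _ = (s * s ^ (1-α)) * t / (K * t^2) := by rw [e, e3]
    _ = t * (s * (s ^ (1-α) / (K * t^2))) := by ring
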